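/- Let μ ≠ 0, ε = ±1. The Ricci tensor ρ_{ij} = Σ_k (∂_kΓ^k_{ij} − ∂_iΓ^k_{kj} + Σ_l(Γ^k_{kl}Γ^l_{ij} − Γ^k_{il}Γ^l_{kj})) of the metric g₁₁ = (ε/μ)(e^{−2μx₃} − 1), g₁₂ = 1, g₁₃ = μx₂, g₃₃ = 1 on ℝ³ is given by ρ₁₁ = −½εμ(3e^{−2μx₃} − 1), ρ₁₂ = −½μ², ρ₁₃ = −½μ³x₂, ρ₂₂ = ρ₂₃ = 0, ρ₃₃ = −½μ². -/

import Mathlib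

/-- A point of `ℝ³`. -/
abbrev Pt := Fin 3 → ℝ

/-- Partial derivative `∂ᵢ f` of a scalar function on `ℝ³`. -/
noncomputable def pder (i : Fin 3) (f : Pt → ℝ) (p : Pt) : ℝ :=
  fderiv ℝ f p (Pi.single i 1)

lemma pder_master (a b c d e μ : ℝ) (p : Pt) (i : Fin 3) :
    pder i (fun q : Pt => a + b * q 1 + c * (q 1 * q 1)
        + (d + e * q 1) * Real.exp (-(2*μ*q 2))) p
    = ![0, b + 2*c*p 1 + e * Real.exp (-(2*μ*p 2)),
        (d + e * p 1) * Real.exp (-(2*μ*p 2)) * (-(2*μ))] i := by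
  have h1 : HasFDerivAt (fun q : Pt => q 1)
      (ContinuousLinearMap.proj (R := ℝ) (φ := fun _ : Fin 3 => ℝ) 1) p :=
    hasFDerivAt_apply 1 p
  have h2 : HasFDerivAt (fun q : Pt => q 2)
      (ContinuousLinearMap.proj (R := ℝ) (φ := fun _ : Fin 3 => ℝ) 2) p :=
    hasFDerivAt_apply 2 p
  have hE := ((h2.const_mul (2*μ)).neg).exp
  have hf := (((hasFDerivAt_const a p).add (h1.const_mul b)).add
      ((h1.mul h1).const_mul c)).add
      (((hasFDerivAt_const d p).add (h1.const_mul e)).mul hE)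
  rw [pder, (show HasFDerivAt (fun q : Pt => a + b * q 1 + c * (q 1 * q 1)
        + (d + e * q 1) * Real.exp (-(2*μ*q 2))) _ p from hf).fderiv]
  fin_cases i <;>
    simp [Pi.single_apply, ContinuousLinearMap.proj_apply] <;> ring

lemma pder_const (c : ℝ) (p : Pt) (i : Fin 3) : pder i (fun _ : Pt => c) p = 0 := by
  simp [pder]

lemma pder_A (μ ε : ℝ) (p : Pt) (i : Fin 3) :
    pder i (fun q : Pt => -(ε * μ * q 1 * Real.exp (-(2*μ*q 2)))) p
    = ![0, -(ε * μ * Real.exp (-(2*μ*p 2))),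
        2*ε*μ^2*p 1*Real.exp (-(2*μ*p 2))] i := by
  have h : (fun q : Pt => -(ε * μ * q 1 * Real.exp (-(2*μ*q 2))))
      = (fun q : Pt => 0 + 0 * q 1 + 0 * (q 1 * q 1)
          + (0 + (-(ε*μ)) * q 1) * Real.exp (-(2*μ*q 2))) := by
    funext q; ring
  rw [h, pder_master]; fin_cases i <;> simp only [Matrix.cons_val_zero, Matrix.cons_val_one, Matrix.head_cons, Matrix.cons_val_two, Matrix.tail_cons, Fin.isValue] <;> ring

lemma pder_B (μ ε : ℝ) (p : Pt) (i : Fin 3) :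
    pder i (fun q : Pt => -(μ^2 * q 1 / 2)) p = ![0, -(μ^2/2), 0] i := by
  have h : (fun q : Pt => -(μ^2 * q 1 / 2))
      = (fun q : Pt => 0 + (-(μ^2/2)) * q 1 + 0 * (q 1 * q 1)
          + (0 + 0 * q 1) * Real.exp (-(2*μ*q 2))) := by
    funext q; ring
  rw [h, pder_master]; fin_cases i <;> simp only [Matrix.cons_val_zero, Matrix.cons_val_one, Matrix.head_cons, Matrix.cons_val_two, Matrix.tail_cons, Fin.isValue] <;> ring

lemma pder_C (μ ε : ℝ) (p : Pt) (i : Fin 3) :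
    pder i (fun q : Pt => -((ε * Real.exp (-(2*μ*q 2)) + ε + μ^3 * (q 1)^2) / 2)) p
    = ![0, -(μ^3 * p 1), ε * μ * Real.exp (-(2*μ*p 2))] i := by
  have h : (fun q : Pt => -((ε * Real.exp (-(2*μ*q 2)) + ε + μ^3 * (q 1)^2) / 2))
      = (fun q : Pt => (-(ε/2)) + 0 * q 1 + (-(μ^3/2)) * (q 1 * q 1)
          + ((-(ε/2)) + 0 * q 1) * Real.exp (-(2*μ*q 2))) := by
    funext q; ring
  rw [h, pder_master]; fin_cases i <;> simp only [Matrix.cons_val_zero, Matrix.cons_val_one, Matrix.head_cons, Matrix.cons_val_two, Matrix.tail_cons, Fin.isValue] <;> ring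

lemma pder_D (μ ε : ℝ) (p : Pt) (i : Fin 3) :
    pder i (fun q : Pt => ε * Real.exp (-(2*μ*q 2))) p
    = ![0, 0, -(2*ε*μ*Real.exp (-(2*μ*p 2)))] i := by
  have h : (fun q : Pt => ε * Real.exp (-(2*μ*q 2)))
      = (fun q : Pt => 0 + 0 * q 1 + 0 * (q 1 * q 1)
          + (ε + 0 * q 1) * Real.exp (-(2*μ*q 2))) := by
    funext q; ring
  rw [h, pder_master]; fin_cases i <;> simp only [Matrix.cons_val_zero, Matrix.cons_val_one, Matrix.head_cons, Matrix.cons_val_two, Matrix.tail_cons, Fin.isValue] <;> ring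

lemma pder_F (μ ε : ℝ) (p : Pt) (i : Fin 3) :
    pder i (fun q : Pt => μ^2 * q 1 / 2) p = ![0, μ^2/2, 0] i := by
  have h : (fun q : Pt => μ^2 * q 1 / 2)
      = (fun q : Pt => 0 + (μ^2/2) * q 1 + 0 * (q 1 * q 1)
          + (0 + 0 * q 1) * Real.exp (-(2*μ*q 2))) := by
    funext q; ring
  rw [h, pder_master]; fin_cases i <;> simp only [Matrix.cons_val_zero, Matrix.cons_val_one, Matrix.head_cons, Matrix.cons_val_two, Matrix.tail_cons, Fin.isValue] <;> ring

/-- The Christoffel symbols of `g` (index order `k i j`). -/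
noncomputable def Γexp (μ ε : ℝ) (p : Pt) : Fin 3 → Fin 3 → Fin 3 → ℝ :=
  ![![![0, 0, -(μ/2)],
     ![0, 0, 0],
     ![-(μ/2), 0, 0]],
    ![![-(ε * μ * p 1 * Real.exp (-(2*μ*p 2))), -(μ^2 * p 1 / 2),
        -((ε * Real.exp (-(2*μ*p 2)) + ε + μ^3 * (p 1)^2) / 2)],
     ![-(μ^2 * p 1 / 2), 0, μ/2],
     ![-((ε * Real.exp (-(2*μ*p 2)) + ε + μ^3 * (p 1)^2) / 2), μ/2, 0]],
    ![![ε * Real.exp (-(2*μ*p 2)), μ/2, μ^2 * p 1 / 2],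
     ![μ/2, 0, 0],
     ![μ^2 * p 1 / 2, 0, 0]]]

/-- The Ricci tensor
`ρ_{ij} = Σ_k (∂_kΓ^k_{ij} − ∂_iΓ^k_{kj} + Σ_l(Γ^k_{kl}Γ^l_{ij} − Γ^k_{il}Γ^l_{kj}))`. -/
noncomputable def Ricci (μ ε : ℝ) (i j : Fin 3) (p : Pt) : ℝ :=
  ∑ k : Fin 3, (pder k (fun q => Γexp μ ε q k i j) p - pder i (fun q => Γexp μ ε q k k j) p
    + ∑ l : Fin 3, (Γexp μ ε p k k l * Γexp μ ε p l i j - Γexp μ ε p k i l * Γexp μ ε p l k j))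

/-- The explicit Ricci tensor of `g`. -/
noncomputable def RicciExp (μ ε : ℝ) (p : Pt) : Matrix (Fin 3) (Fin 3) ℝ :=
  ![![-(1/2) * ε * μ * (3 * Real.exp (-(2*μ*p 2)) - 1), -(1/2) * μ^2, -(1/2) * μ^3 * p 1],
    ![-(1/2) * μ^2, 0, 0],
    ![-(1/2) * μ^3 * p 1, 0, -(1/2) * μ^2]]

set_option maxHeartbeats 1000000 in
/-- The Ricci tensor of `g` has exactly the listed components. -/
theorem ricci_tensor (μ ε : ℝ) (hμ : μ ≠ 0) (hε : ε = 1 ∨ ε = -1) :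
    ∀ (p : Pt) (i j : Fin 3), Ricci μ ε i j p = RicciExp μ ε p i j := by
  intro p i j
  have h3 : ∀ x : Fin 3, x = 0 ∨ x = 1 ∨ x = 2 := by decide
  rcases h3 i with rfl | rfl | rfl <;> rcases h3 j with rfl | rfl | rfl <;>
  · simp only [Ricci, RicciExp, Γexp, Fin.sum_univ_three, Fin.isValue,
      Matrix.cons_val_zero, Matrix.cons_val_one, Matrix.head_cons,
      Matrix.cons_val_two, Matrix.tail_cons, Fin.mk_zero, Fin.mk_one]
    simp only [pder_const, pder_A μ ε, pder_B μ ε, pder_C μ ε, pder_D μ ε, pder_F μ ε,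
      Matrix.cons_val_zero, Matrix.cons_val_one, Matrix.head_cons,
      Matrix.cons_val_two, Matrix.tail_cons]
    rcases hε with rfl | rfl <;> ring
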